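/- arXiv:math/0301160 — 2 statements merged into one kernel-verified Lean document; each statement's English description precedes it below -/
import Mathlib

section
/- For every ε ∈ (0,1) and every real x with 0 ≤ x ≤ ε, and for every positive integer s and integer f with 1 ≤ f ≤ 4s, if g(f) = ((s+f)p/s)^s ((s+f)(1-p)/f)^f with p ∈ (0,1) fixed, then whenever |fp - (1-p)s| > 2xs one has g(f) ≤ exp(-(1/3) s x² p² (1-p)). -/
lemma logBx {y : ℝ} (hy : 1 ≤ y) : Real.log y ≤ (y - y⁻¹)/2 := by
  have h : AntitoneOn (fun z : ℝ => Real.log z - z/2 + z⁻¹/2) (Set.Ici 1) := by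
    apply antitoneOn_of_deriv_nonpos (convex_Ici 1)
    · apply ContinuousOn.add
      apply ContinuousOn.sub
      · exact Real.continuousOn_log.mono (by intro z hz; simp at hz ⊢; linarith)
      · exact (continuous_id.div_const 2).continuousOn
      · exact ContinuousOn.div_const (continuousOn_inv₀.mono (by intro z hz; simp at hz ⊢; intro h; linarith)) 2
    · intro z hz
      rw [interior_Ici] at hz
      simp only [Set.mem_Ioi] at hz
      have hz0 : z ≠ 0 := by linarith
      apply DifferentiableAt.differentiableWithinAt
      exact ((Real.differentiableAt_log hz0).sub (differentiableAt_fun_id.div_const 2)).add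
        ((differentiableAt_inv hz0).div_const 2)
    · intro z hz
      rw [interior_Ici] at hz
      simp only [Set.mem_Ioi] at hz
      have hz0 : (0:ℝ) < z := by linarith
      have hd : HasDerivAt (fun z : ℝ => Real.log z - z/2 + z⁻¹/2)
          (z⁻¹ - 1/2 + (-(z^2)⁻¹)/2) z := by
        have h1 := Real.hasDerivAt_log (ne_of_gt hz0)
        have h2 := (hasDerivAt_inv (ne_of_gt hz0))
        have h3 : HasDerivAt (fun z : ℝ => z/2) (1/2) z := (hasDerivAt_id z).div_const 2
        exact (h1.sub h3).add (h2.div_const 2)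
      rw [hd.deriv]
      have : z⁻¹ - 1/2 + (-(z^2)⁻¹)/2 = -((z-1)^2/(2*z^2)) := by
        field_simp
        ring
      rw [this]
      have : (0:ℝ) ≤ (z-1)^2/(2*z^2) := by positivity
      linarith
  have := h (Set.self_mem_Ici) (Set.mem_Ici.mpr hy) hy
  simp only [Real.log_one, inv_one] at this
  linarith

lemma logB {u : ℝ} (h0 : 0 ≤ u) : Real.log (1 + u) ≤ u - u^2/(2*(1+u)) := by
  have h1 : (1:ℝ) ≤ 1 + u := by linarith
  have := logBx h1
  have hne : (1:ℝ) + u ≠ 0 := by linarith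
  have heq : ((1+u) - (1+u)⁻¹)/2 = u - u^2/(2*(1+u)) := by
    field_simp
    ring
  linarith [heq ▸ this]

lemma logA {t : ℝ} (h0 : 0 ≤ t) (h1 : t < 1) : Real.log (1 - t) ≤ -t - t^2/2 := by
  have h : AntitoneOn (fun z : ℝ => Real.log (1-z) + z + z^2/2) (Set.Icc 0 t) := by
    apply antitoneOn_of_deriv_nonpos (convex_Icc 0 t)
    · apply ContinuousOn.add
      apply ContinuousOn.add
      · apply ContinuousOn.comp Real.continuousOn_log (by fun_prop)
        intro z hz
        simp only [Set.mem_Icc] at hz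
        simp only [Set.mem_compl_iff, Set.mem_singleton_iff]
        intro h; linarith [hz.2]
      · exact continuousOn_id
      · fun_prop
    · intro z hz
      rw [interior_Icc] at hz
      simp only [Set.mem_Ioo] at hz
      have : (1:ℝ) - z ≠ 0 := by intro h; nlinarith [hz.1, hz.2]
      apply DifferentiableAt.differentiableWithinAt
      apply DifferentiableAt.add
      apply DifferentiableAt.add
      · exact (Real.differentiableAt_log this).comp z (by fun_prop)
      · exact differentiableAt_fun_id
      · fun_prop
    · intro z hz
      rw [interior_Icc] at hz
      simp only [Set.mem_Ioo] at hz
      have hz1 : (0:ℝ) < 1 - z := by nlinarith [hz.1, hz.2, h1]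
      have hd : HasDerivAt (fun z : ℝ => Real.log (1-z) + z + z^2/2)
          ((1-z)⁻¹ * (-1) + 1 + (2*z)/2) z := by
        have h1' : HasDerivAt (fun z : ℝ => (1:ℝ) - z) (-1) z := by
          simpa using ((hasDerivAt_id z).const_sub 1)
        have h2 := (Real.hasDerivAt_log (ne_of_gt hz1)).comp z h1'
        have h3 : HasDerivAt (fun z : ℝ => z^2/2) ((2*z)/2) z := by
          simpa using ((hasDerivAt_pow 2 z).div_const 2)
        exact (h2.add (hasDerivAt_id z)).add h3
      rw [hd.deriv]
      have : (1-z)⁻¹ * (-1) + 1 + (2*z)/2 = -(z^2/(1-z)) := by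
        field_simp
        ring
      rw [this]
      have : (0:ℝ) ≤ z^2/(1-z) := by positivity
      linarith
  have := h (Set.left_mem_Icc.mpr h0) (Set.right_mem_Icc.mpr h0) h0
  simp only [sub_zero, Real.log_one] at this
  norm_num at this
  linarith
set_option maxHeartbeats 800000 in
theorem stmt4 (ε : ℝ) (hε : ε ∈ Set.Ioo (0:ℝ) 1) (x : ℝ) (hx0 : 0 ≤ x) (hxε : x ≤ ε)
    (p : ℝ) (hp : p ∈ Set.Ioo (0:ℝ) 1) (s : ℕ) (hs : 0 < s)
    (f : ℕ) (hf1 : 1 ≤ f) (hf4 : f ≤ 4*s)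
    (hdev : |(f:ℝ)*p - (1-p)*(s:ℝ)| > 2*x*(s:ℝ)) :
    (((s:ℝ)+f)*p/s)^s * (((s:ℝ)+f)*(1-p)/f)^f
      ≤ Real.exp (-(1/3) * s * x^2 * p^2 * (1-p)) := by
  obtain ⟨hp0, hp1⟩ := hp
  obtain ⟨S, hS_def⟩ : ∃ S : ℝ, S = (s:ℝ) := ⟨_, rfl⟩
  obtain ⟨F, hF_def⟩ : ∃ F : ℝ, F = (f:ℝ) := ⟨_, rfl⟩
  rw [← hS_def, ← hF_def] at hdev ⊢
  have hS : (0:ℝ) < S := by rw [hS_def]; exact_mod_cast hs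
  have hF : (0:ℝ) < F := by rw [hF_def]; exact_mod_cast hf1
  have hF4 : F ≤ 4*S := by rw [hS_def, hF_def]; exact_mod_cast hf4
  obtain ⟨d, hd_def⟩ : ∃ d : ℝ, d = (S+F)*p - S := ⟨_, rfl⟩
  have hdev' : |d| > 2*x*S := by
    have : d = F*p - (1-p)*S := by rw [hd_def]; ring
    rw [this]; exact hdev
  have hdlt : d < F := by rw [hd_def]; nlinarith
  have hdgt : -S < d := by rw [hd_def]; nlinarith
  have hy1 : ((S+F)*p/S) = 1 + d/S := by rw [hd_def]; field_simp; ring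
  have hy2 : ((S+F)*(1-p)/F) = 1 - d/F := by rw [hd_def]; field_simp; ring
  have hy1pos : (0:ℝ) < 1 + d/S := by rw [← hy1]; positivity
  have hy2pos : (0:ℝ) < 1 - d/F := by
    have : d/F < 1 := (div_lt_one hF).mpr hdlt
    linarith
  rw [hy1, hy2]
  have hgpos : (0:ℝ) < (1 + d/S)^s * (1 - d/F)^f := by positivity
  rw [← Real.exp_log hgpos, Real.exp_le_exp,
      Real.log_mul (by positivity) (by positivity), Real.log_pow, Real.log_pow]
  rw [← hS_def, ← hF_def]
  have key : S * Real.log (1 + d/S) + F * Real.log (1 - d/F) ≤ -(2/5)*x^2*S := by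
    rcases le_or_gt 0 d with hd0 | hd0
    · have hdx : 2*x*S < d := by rwa [abs_of_nonneg hd0] at hdev'
      have h1 : Real.log (1 + d/S) ≤ d/S - (d/S)^2/(2*(1+d/S)) :=
        logB (by positivity)
      have h2 : Real.log (1 - d/F) ≤ -(d/F) - (d/F)^2/2 :=
        logA (by positivity) ((div_lt_one hF).mpr hdlt)
      have hSd : (0:ℝ) < S + d := by linarith
      have e1 : S * (d/S - (d/S)^2/(2*(1+d/S))) = d - d^2/(2*(S+d)) := by
        field_simp
      have e2 : F * (-(d/F) - (d/F)^2/2) = -d - d^2/(2*F) := by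
        field_simp
      have b1 : S * Real.log (1 + d/S) ≤ d - d^2/(2*(S+d)) := by
        rw [← e1]; exact mul_le_mul_of_nonneg_left h1 hS.le
      have b2 : F * Real.log (1 - d/F) ≤ -d - d^2/(2*F) := by
        rw [← e2]; exact mul_le_mul_of_nonneg_left h2 hF.le
      have hq : 2/5*x^2*S ≤ d^2/(2*(S+d)) := by
        rw [le_div_iff₀ (by positivity)]
        have h5 : S + d ≤ 5*S := by linarith
        have hdsq : (2*x*S)^2 ≤ d^2 := by
          nlinarith [mul_nonneg (mul_nonneg (by norm_num : (0:ℝ) ≤ 2) hx0) hS.le]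
        have h6 : 4/5*x^2*S*(S+d) ≤ 4/5*x^2*S*(5*S) :=
          mul_le_mul_of_nonneg_left h5 (by positivity)
        nlinarith [h6, hdsq]
      have hq2 : (0:ℝ) ≤ d^2/(2*F) := by positivity
      calc S * Real.log (1 + d/S) + F * Real.log (1 - d/F)
          ≤ (d - d^2/(2*(S+d))) + (-d - d^2/(2*F)) := add_le_add b1 b2
        _ ≤ -(2/5)*x^2*S := by linarith
    · have hdx : 2*x*S < -d := by rwa [abs_of_neg hd0] at hdev'
      have h1 : Real.log (1 + d/S) ≤ -(-d/S) - (-d/S)^2/2 := by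
        have := logA (t := -d/S) (div_nonneg (by linarith) hS.le)
          (by rw [div_lt_one hS]; linarith)
        have he : 1 - (-d/S) = 1 + d/S := by ring
        rwa [he] at this
      have h2 : Real.log (1 - d/F) ≤ -d/F - (-d/F)^2/(2*(1-d/F)) := by
        have := logB (u := -d/F) (div_nonneg (by linarith) hF.le)
        have he : 1 + (-d/F) = 1 - d/F := by ring
        rwa [he] at this
      have hFd : (0:ℝ) < F - d := by linarith
      have e1 : S * (-(-d/S) - (-d/S)^2/2) = d - d^2/(2*S) := by
        field_simp
      have e2 : F * (-d/F - (-d/F)^2/(2*(1-d/F))) = -d - d^2/(2*(F-d)) := by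
        rw [show (1 - d/F) = (F-d)/F by field_simp]
        field_simp
      have b1 : S * Real.log (1 + d/S) ≤ d - d^2/(2*S) := by
        rw [← e1]; exact mul_le_mul_of_nonneg_left h1 hS.le
      have b2 : F * Real.log (1 - d/F) ≤ -d - d^2/(2*(F-d)) := by
        rw [← e2]; exact mul_le_mul_of_nonneg_left h2 hF.le
      have hq : 2/5*x^2*S ≤ d^2/(2*S) := by
        rw [le_div_iff₀ (by positivity)]
        have hdsq : (2*x*S)^2 ≤ d^2 := by
          nlinarith [mul_nonneg (mul_nonneg (by norm_num : (0:ℝ) ≤ 2) hx0) hS.le]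
        nlinarith [hdsq, mul_nonneg (mul_nonneg hx0 hx0) hS.le]
      have hq2 : (0:ℝ) ≤ d^2/(2*(F-d)) := by positivity
      calc S * Real.log (1 + d/S) + F * Real.log (1 - d/F)
          ≤ (d - d^2/(2*S)) + (-d - d^2/(2*(F-d))) := add_le_add b1 b2
        _ ≤ -(2/5)*x^2*S := by linarith
  have final : -(2/5)*x^2*S ≤ -(1/3) * S * x^2 * p^2 * (1-p) := by
    have hpb : p^2*(1-p) ≤ 1 := by nlinarith
    have hxS : (0:ℝ) ≤ x^2 * S := by positivity
    nlinarith [mul_nonneg hxS (sub_nonneg.mpr hpb)]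
  calc S * Real.log (1 + d/S) + F * Real.log (1 - d/F)
      ≤ -(2/5)*x^2*S := key
    _ ≤ -(1/3) * S * x^2 * p^2 * (1-p) := final
end

section
/- Let 0 < p < 1/2, let x > 0 be small, and let nonnegative reals a_{s,f} (indexed by positive integers s, f with f ≤ 4s) satisfy a_{s,f} ≤ p^{-s}(1-p)^{-f} for all choices of p ∈ (0,1) (i.e. a_{s,f} ≤ inf_{q∈(0,1)} q^{-s}(1-q)^{-f}). Then for each fixed s, ∑_{f: |fp-(1-p)s| > 2xs, 1 ≤ f ≤ 4s} a_{s,f}·p^s·(1-p)^f ≤ 4s·exp(-(1/3)·s·x²·p²·(1-p)). -/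
set_option maxHeartbeats 1000000

private lemma log_lb (y : ℝ) (h : -(1/2) ≤ y) : y - 2*y^2 ≤ Real.log (1+y) := by
  have h0 : 0 < 1 + y := by linarith
  have h1 : 1 - (1+y)⁻¹ ≤ Real.log (1+y) := Real.one_sub_inv_le_log_of_pos h0
  have hinv : (1+y) * (1+y)⁻¹ = 1 := mul_inv_cancel₀ h0.ne'
  have hipos : 0 < (1+y)⁻¹ := inv_pos.2 h0
  have key : (1 - (1+y)⁻¹ - (y - 2*y^2))*(1+y) = y^2*(1+2*y) := by
    linear_combination -hinv
  have hnn : 0 ≤ y^2*(1+2*y) := mul_nonneg (sq_nonneg y) (by linarith)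
  have h2 : (0:ℝ)*(1+y) ≤ (1 - (1+y)⁻¹ - (y - 2*y^2))*(1+y) := by
    rw [zero_mul, key]; exact hnn
  have h3 := le_of_mul_le_mul_right h2 h0
  linarith

private lemma key_term (p x : ℝ) (hp : 0 < p) (hp2 : p < 1/2) (hx : 0 < x)
    (s f : ℕ) (hs : 1 ≤ s) (hf1 : 1 ≤ f) (hf4 : f ≤ 4*s)
    (hdev : |(f:ℝ)*p - (1-p)*(s:ℝ)| > 2*x*(s:ℝ))
    (a : ℝ) (hb : ∀ q : ℝ, 0 < q → q < 1 → a ≤ q^(-(s:ℝ)) * (1-q)^(-(f:ℝ))) :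
    a * p^s * (1-p)^f ≤ Real.exp (-(1/3) * s * x^2 * p^2 * (1-p)) := by
  have hs1 : (1:ℝ) ≤ (s:ℝ) := by exact_mod_cast hs
  have hspos : (0:ℝ) < (s:ℝ) := by linarith
  have hf1' : (1:ℝ) ≤ (f:ℝ) := by exact_mod_cast hf1
  have hf4' : (f:ℝ) ≤ 4*(s:ℝ) := by exact_mod_cast hf4
  have h1p : 0 < 1 - p := by linarith
  obtain ⟨v, hvdef⟩ : ∃ v : ℝ, v = ((f:ℝ)*p - (1-p)*(s:ℝ))/(s:ℝ) := ⟨_, rfl⟩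
  have hfp : (f:ℝ)*p = (1-p)*(s:ℝ) + (s:ℝ)*v := by
    rw [hvdef]; field_simp; ring
  have hm1 : (f:ℝ)*p ≤ 4*(s:ℝ)*p := mul_le_mul_of_nonneg_right hf4' hp.le
  have hm2 : 4*(s:ℝ)*p ≤ 4*(s:ℝ)*(1/2) := by
    have := mul_le_mul_of_nonneg_left hp2.le (by linarith : (0:ℝ) ≤ 4*(s:ℝ))
    linarith [this]
  have hm3 : (0:ℝ) ≤ (f:ℝ)*p := mul_nonneg (by linarith) hp.le
  have hm4 : (0:ℝ) ≤ p*(s:ℝ) := mul_nonneg hp.le hspos.le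
  have hv2 : v ≤ 2 := by
    rw [hvdef, div_le_iff₀ hspos]
    have : (1-p)*(s:ℝ) = (s:ℝ) - p*(s:ℝ) := by ring
    linarith [this]
  have hv2' : -2 ≤ v := by
    rw [hvdef, le_div_iff₀ hspos]
    have : (1-p)*(s:ℝ) = (s:ℝ) - p*(s:ℝ) := by ring
    linarith [this]
  obtain ⟨δ, hδdef⟩ : ∃ d : ℝ, d = -v/16 := ⟨_, rfl⟩
  have hδub : δ ≤ 1/8 := by rw [hδdef]; linarith
  have hδlb : -(1/8) ≤ δ := by rw [hδdef]; linarith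
  obtain ⟨q, hqdef⟩ : ∃ q : ℝ, q = p*(1+δ) := ⟨_, rfl⟩
  have hq0 : 0 < q := by rw [hqdef]; exact mul_pos hp (by linarith)
  have hq1 : q < 1 := by
    rw [hqdef]
    have h1 : p*(1+δ) ≤ p*(9/8) := mul_le_mul_of_nonneg_left (by linarith) hp.le
    linarith
  have h1q : 0 < 1 - q := by linarith
  obtain ⟨w, hwdef⟩ : ∃ w : ℝ, w = p*δ/(1-p) := ⟨_, rfl⟩
  have hw1 : w*(1-p) = p*δ := by rw [hwdef]; field_simp
  have hwub : w ≤ 1/8 := by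
    rw [hwdef, div_le_iff₀ h1p]
    have h1 : p*δ ≤ p*(1/8) := mul_le_mul_of_nonneg_left hδub hp.le
    linarith
  have hwlb : -(1/8) ≤ w := by
    rw [hwdef, le_div_iff₀ h1p]
    have h1 : p*(-(1/8)) ≤ p*δ := mul_le_mul_of_nonneg_left hδlb hp.le
    linarith
  -- log identities
  have h1qw : 1 - q = (1-p)*(1-w) := by
    have : (1-p)*(1-w) = 1 - p - w*(1-p) := by ring
    rw [hqdef, this, hw1]; ring
  have hlog1 : Real.log (p/q) = -Real.log (1+δ) := by
    have haδ : (1:ℝ)+δ ≠ 0 := by intro h; linarith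
    rw [hqdef, show p/(p*(1+δ)) = (1+δ)⁻¹ by field_simp, Real.log_inv]
  have hlog2 : Real.log ((1-p)/(1-q)) = -Real.log (1-w) := by
    have hw0 : (1:ℝ)-w ≠ 0 := by intro h; linarith
    rw [h1qw, show (1-p)/((1-p)*(1-w)) = (1-w)⁻¹ by field_simp, Real.log_inv]
  have hA : -Real.log (1+δ) ≤ -δ + 2*δ^2 := by
    have := log_lb δ (by linarith); linarith
  have hB : -Real.log (1-w) ≤ w + 2*w^2 := by
    have h := log_lb (-w) (by linarith)
    rw [show 1 + -w = 1 - w by ring, show (-w)^2 = w^2 by ring] at h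
    linarith
  -- exponent bound
  have hdev2 : 4*x^2 < v^2 := by
    have h0 : 0 ≤ 2*x*(s:ℝ) := by positivity
    have h2 := mul_self_lt_mul_self h0 hdev
    rw [abs_mul_abs_self] at h2
    have hu : (f:ℝ)*p - (1-p)*(s:ℝ) = (s:ℝ)*v := by rw [hvdef]; field_simp
    rw [hu] at h2
    have hss : (0:ℝ) < (s:ℝ)*(s:ℝ) := mul_pos hspos hspos
    have h3 : 4*x^2*((s:ℝ)*(s:ℝ)) < v^2*((s:ℝ)*(s:ℝ)) := by
      have e1 : (2*x*(s:ℝ))*(2*x*(s:ℝ)) = 4*x^2*((s:ℝ)*(s:ℝ)) := by ring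
      have e2 : ((s:ℝ)*v)*((s:ℝ)*v) = v^2*((s:ℝ)*(s:ℝ)) := by ring
      rw [e1, e2] at h2; exact h2
    exact lt_of_mul_lt_mul_right h3 hss.le
  have hsvδ : (s:ℝ)*v*δ ≤ 0 := by
    rw [hδdef]
    have : (s:ℝ)*v*(-v/16) = -((s:ℝ)*v^2)/16 := by ring
    rw [this]
    have : 0 ≤ (s:ℝ)*v^2 := mul_nonneg hspos.le (sq_nonneg v)
    linarith
  have hfw : (f:ℝ)*w ≤ (s:ℝ)*δ + (s:ℝ)*v*δ := by
    have heq : (f:ℝ)*w*(1-p) = (1-p)*((s:ℝ)*δ) + (s:ℝ)*v*δ := by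
      have h1 : (f:ℝ)*w*(1-p) = ((f:ℝ)*p)*δ := by
        rw [mul_assoc, hw1]; ring
      rw [h1, hfp]; ring
    have hps : p*((s:ℝ)*v*δ) ≤ 0 := by
      have := mul_le_mul_of_nonneg_left hsvδ hp.le
      simpa using this
    have hkey : ((f:ℝ)*w - ((s:ℝ)*δ + (s:ℝ)*v*δ))*(1-p) ≤ 0 := by
      have heq2 : ((f:ℝ)*w - ((s:ℝ)*δ + (s:ℝ)*v*δ))*(1-p) = p*((s:ℝ)*v*δ) := by
        linear_combination heq
      rw [heq2]; exact hps
    have h2 : ((f:ℝ)*w - ((s:ℝ)*δ + (s:ℝ)*v*δ))*(1-p) ≤ 0*(1-p) := by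
      rw [zero_mul]; exact hkey
    have := le_of_mul_le_mul_right h2 h1p
    linarith
  have hw2 : w^2 ≤ δ^2 := by
    have hsq : w^2*(1-p)^2 = p^2*δ^2 := by
      linear_combination (w*(1-p)+p*δ)*hw1
    have hpp : p^2 ≤ (1-p)^2 := by
      have : (1-p)^2 - p^2 = 1 - 2*p := by ring
      linarith
    have h2 : w^2*(1-p)^2 ≤ δ^2*(1-p)^2 := by
      calc w^2*(1-p)^2 = p^2*δ^2 := hsq
        _ ≤ (1-p)^2*δ^2 := mul_le_mul_of_nonneg_right hpp (sq_nonneg δ)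
        _ = δ^2*(1-p)^2 := by ring
    exact le_of_mul_le_mul_right h2 (by positivity)
  have hfw2 : (f:ℝ)*w^2 ≤ 4*(s:ℝ)*δ^2 := by
    calc (f:ℝ)*w^2 ≤ (4*(s:ℝ))*w^2 :=
          mul_le_mul_of_nonneg_right hf4' (sq_nonneg w)
      _ ≤ (4*(s:ℝ))*δ^2 := mul_le_mul_of_nonneg_left hw2 (by linarith)
      _ = 4*(s:ℝ)*δ^2 := by ring
  have hsvδ2 : (s:ℝ)*v*δ = -(s:ℝ)*v^2/16 := by rw [hδdef]; ring
  have hδv : δ^2 = v^2/256 := by rw [hδdef]; ring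
  have hL : (s:ℝ)*Real.log (p/q) + (f:ℝ)*Real.log ((1-p)/(1-q))
      ≤ -(1/3) * s * x^2 * p^2 * (1-p) := by
    rw [hlog1, hlog2]
    have t1 : (s:ℝ)*(-Real.log (1+δ)) ≤ (s:ℝ)*(-δ + 2*δ^2) :=
      mul_le_mul_of_nonneg_left hA hspos.le
    have t2 : (f:ℝ)*(-Real.log (1-w)) ≤ (f:ℝ)*(w + 2*w^2) :=
      mul_le_mul_of_nonneg_left hB (by linarith)
    have hsδv : (s:ℝ)*δ^2 = (s:ℝ)*v^2/256 := by rw [hδdef]; ring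
    have key : (s:ℝ)*(-δ + 2*δ^2) + (f:ℝ)*(w + 2*w^2) ≤ -3*(s:ℝ)*v^2/128 := by
      have expand : (s:ℝ)*(-δ + 2*δ^2) + (f:ℝ)*(w + 2*w^2)
          = -((s:ℝ)*δ) + 2*((s:ℝ)*δ^2) + (f:ℝ)*w + 2*((f:ℝ)*w^2) := by ring
      rw [expand]
      linarith [hfw, hfw2, hsvδ2, hsδv]
    have last : -3*(s:ℝ)*v^2/128 ≤ -(1/3) * s * x^2 * p^2 * (1-p) := by
      have hA : (0:ℝ) ≤ (s:ℝ)*x^2 := by positivity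
      have e1 : (s:ℝ)*(4*x^2) ≤ (s:ℝ)*v^2 :=
        mul_le_mul_of_nonneg_left hdev2.le hspos.le
      have e2 : p^2*(1-p) ≤ 1/4 := by
        have hpsq : p*p ≤ (1/2)*(1/2) := mul_le_mul hp2.le hp2.le hp.le (by norm_num)
        have h1' : p^2*(1-p) ≤ p^2*1 :=
          mul_le_mul_of_nonneg_left (by linarith) (sq_nonneg p)
        have h2' : p^2 = p*p := sq p
        linarith
      have t3 : (1/3)*((s:ℝ)*x^2)*(p^2*(1-p)) ≤ (1/3)*((s:ℝ)*x^2)*(1/4) :=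
        mul_le_mul_of_nonneg_left e2 (by positivity)
      have heq4 : -(1/3) * (s:ℝ) * x^2 * p^2 * (1-p)
          = -((1/3)*((s:ℝ)*x^2)*(p^2*(1-p))) := by ring
      rw [heq4]
      linarith [e1, t3, hA]
    linarith [t1, t2, key, last]
  -- assemble
  have ha2 : a ≤ (q^s)⁻¹ * ((1-q)^f)⁻¹ := by
    have := hb q hq0 hq1
    rwa [Real.rpow_neg hq0.le, Real.rpow_neg h1q.le, Real.rpow_natCast,
      Real.rpow_natCast] at this
  have hps : (0:ℝ) < p^s := by positivity
  have h1pf : (0:ℝ) < (1-p)^f := by positivity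
  have step1 : a * p^s * (1-p)^f ≤ (p/q)^s * ((1-p)/(1-q))^f := by
    have h := mul_le_mul_of_nonneg_right
      (mul_le_mul_of_nonneg_right ha2 hps.le) h1pf.le
    calc a * p^s * (1-p)^f ≤ (q^s)⁻¹ * ((1-q)^f)⁻¹ * p^s * (1-p)^f := h
      _ = (p/q)^s * ((1-p)/(1-q))^f := by
          rw [div_pow, div_pow, div_eq_mul_inv, div_eq_mul_inv]; ring
  have step2 : (p/q)^s * ((1-p)/(1-q))^f
      = Real.exp ((s:ℝ)*Real.log (p/q) + (f:ℝ)*Real.log ((1-p)/(1-q))) := by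
    rw [Real.exp_add, Real.exp_nat_mul, Real.exp_nat_mul,
      Real.exp_log (div_pos hp hq0), Real.exp_log (div_pos h1p h1q)]
  calc a * p^s * (1-p)^f ≤ (p/q)^s * ((1-p)/(1-q))^f := step1
    _ = Real.exp _ := step2
    _ ≤ Real.exp (-(1/3) * s * x^2 * p^2 * (1-p)) := Real.exp_le_exp.mpr hL

theorem stmt16 (p : ℝ) (hp : 0 < p) (hp2 : p < 1/2)
    (a : ℕ → ℕ → ℝ) (hnn : ∀ s f, 0 ≤ a s f)
    (hbound : ∀ s f : ℕ, 1 ≤ s → 1 ≤ f → f ≤ 4*s →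
      ∀ q : ℝ, 0 < q → q < 1 → a s f ≤ q^(-(s:ℝ)) * (1-q)^(-(f:ℝ))) :
    ∃ ε > 0, ∀ x : ℝ, 0 < x → x < ε → ∀ s : ℕ, 1 ≤ s →
      ∑ f ∈ (Finset.Icc 1 (4*s)).filter
          (fun f : ℕ => |(f:ℝ)*p - (1-p)*(s:ℝ)| > 2*x*(s:ℝ)),
        a s f * p^s * (1-p)^f
      ≤ 4*(s:ℝ) * Real.exp (-(1/3) * s * x^2 * p^2 * (1-p)) := by
  refine ⟨1, one_pos, ?_⟩
  intro x hx _ s hs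
  set T := (Finset.Icc 1 (4*s)).filter
    (fun f : ℕ => |(f:ℝ)*p - (1-p)*(s:ℝ)| > 2*x*(s:ℝ)) with hT
  have hbnd : ∀ f ∈ T, a s f * p^s * (1-p)^f
      ≤ Real.exp (-(1/3) * s * x^2 * p^2 * (1-p)) := by
    intro f hf
    rw [hT, Finset.mem_filter, Finset.mem_Icc] at hf
    exact key_term p x hp hp2 hx s f hs hf.1.1 hf.1.2 hf.2 (a s f)
      (hbound s f hs hf.1.1 hf.1.2)
  have hsum := Finset.sum_le_card_nsmul T _ _ hbnd
  have hcard : T.card ≤ 4*s :=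
    le_trans (Finset.card_filter_le _ _) (by simp [Nat.card_Icc])
  calc ∑ f ∈ T, a s f * p^s * (1-p)^f
      ≤ T.card • Real.exp (-(1/3) * s * x^2 * p^2 * (1-p)) := hsum
    _ ≤ 4*(s:ℝ) * Real.exp (-(1/3) * s * x^2 * p^2 * (1-p)) := by
        rw [nsmul_eq_mul]
        apply mul_le_mul_of_nonneg_right _ (Real.exp_pos _).le
        exact_mod_cast hcard
end
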